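/- Suppose σ_k ⇀ σ* weakly in H¹(Ω), σ_k → σ* a.e. in Ω with c₀ ≤ σ_k ≤ c₁, where σ_k successively minimize functionals J_{ε,k} over nested sets 𝒜̃_k whose union is dense in 𝒜̃_∞, and suppose ‖U(σ_k) − U^δ‖² → ‖U(σ*) − U^δ‖² and ∫W(σ_k) → ∫W(σ*); if additionally lim_k J_{ε,k}(σ_k) = J_{ε,∞}(σ*) (i.e., σ* is the limiting minimizer), then ‖∇σ_k‖²_{L²(Ω)} → ‖∇σ*‖²_{L²(Ω)}, and consequently σ_k → σ* strongly in H¹(Ω). -/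

import Mathlib

open Filter

/-- abstract form of Theorem 5.3. `X` plays the role of `H¹(Ω)`,
`P` the `L²(Ω)`-part and `D` the gradient part of the norm,
`‖σ‖² = ‖Pσ‖² + ‖Dσ‖²`. If `σ_k ⇀ σ*` weakly, `Pσ_k → Pσ*` strongly (from a.e.
convergence/compact embedding), the fidelity and double-well terms of the
functionals converge, and the functional values `J_{ε,k}(σ_k)` converge to
`J_{ε,∞}(σ*)`, then `‖Dσ_k‖² → ‖Dσ*‖²` and `σ_k → σ*` strongly. -/
theorem gradient_norm_and_strong_convergence
    {X Y Z : Type*} [NormedAddCommGroup X] [InnerProductSpace ℝ X] [CompleteSpace X]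
    [NormedAddCommGroup Y] [InnerProductSpace ℝ Y] [CompleteSpace Y]
    [NormedAddCommGroup Z] [InnerProductSpace ℝ Z] [CompleteSpace Z]
    (P : X →L[ℝ] Z) (D : X →L[ℝ] Y)
    (hnorm : ∀ x : X, ‖x‖ ^ 2 = ‖P x‖ ^ 2 + ‖D x‖ ^ 2)
    (σ : ℕ → X) (σstar : X)
    (hweak : ∀ f : X →L[ℝ] ℝ, Tendsto (fun k => f (σ k)) atTop (nhds (f σstar)))
    (hP : Tendsto (fun k => P (σ k)) atTop (nhds (P σstar)))
    (αt ε : ℝ) (hα : 0 < αt) (hε : 0 < ε)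
    (fid : ℕ → ℝ) (fidstar : ℝ) (w : ℕ → ℝ) (wstar : ℝ)
    (hfid : Tendsto fid atTop (nhds fidstar))
    (hw : Tendsto w atTop (nhds wstar))
    (hJ : Tendsto (fun k => fid k + (αt / 2) * (ε * ‖D (σ k)‖ ^ 2 + ε⁻¹ * w k)) atTop
      (nhds (fidstar + (αt / 2) * (ε * ‖D σstar‖ ^ 2 + ε⁻¹ * wstar)))) :
    Tendsto (fun k => ‖D (σ k)‖ ^ 2) atTop (nhds (‖D σstar‖ ^ 2)) ∧
    Tendsto (fun k => ‖σ k - σstar‖) atTop (nhds 0) := by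
  have hc : (αt / 2) * ε ≠ 0 := by positivity
  -- Step 1: ‖D σ_k‖² → ‖D σ*‖²
  have hD : Tendsto (fun k => ‖D (σ k)‖ ^ 2) atTop (nhds (‖D σstar‖ ^ 2)) := by
    have h1 : Tendsto (fun k =>
        (fid k + (αt / 2) * (ε * ‖D (σ k)‖ ^ 2 + ε⁻¹ * w k)) - fid k - (αt / 2) * (ε⁻¹ * w k))
        atTop (nhds ((fidstar + (αt / 2) * (ε * ‖D σstar‖ ^ 2 + ε⁻¹ * wstar)) - fidstar
          - (αt / 2) * (ε⁻¹ * wstar))) :=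
      (hJ.sub hfid).sub ((tendsto_const_nhds.mul (tendsto_const_nhds.mul hw)))
    have h2 : Tendsto (fun k => ((αt / 2) * ε)⁻¹ *
        ((fid k + (αt / 2) * (ε * ‖D (σ k)‖ ^ 2 + ε⁻¹ * w k)) - fid k - (αt / 2) * (ε⁻¹ * w k)))
        atTop (nhds (((αt / 2) * ε)⁻¹ * ((fidstar + (αt / 2) * (ε * ‖D σstar‖ ^ 2 + ε⁻¹ * wstar))
          - fidstar - (αt / 2) * (ε⁻¹ * wstar)))) := tendsto_const_nhds.mul h1
    have e1 : ∀ k, ((αt / 2) * ε)⁻¹ *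
        ((fid k + (αt / 2) * (ε * ‖D (σ k)‖ ^ 2 + ε⁻¹ * w k)) - fid k - (αt / 2) * (ε⁻¹ * w k))
        = ‖D (σ k)‖ ^ 2 := by
      intro k; field_simp; ring
    have e2 : ((αt / 2) * ε)⁻¹ * ((fidstar + (αt / 2) * (ε * ‖D σstar‖ ^ 2 + ε⁻¹ * wstar))
        - fidstar - (αt / 2) * (ε⁻¹ * wstar)) = ‖D σstar‖ ^ 2 := by
      field_simp; ring
    have h3 := h2.congr e1
    rwa [e2] at h3
  refine ⟨hD, ?_⟩
  -- Step 2: ‖σ_k‖² → ‖σ*‖²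
  have hPn : Tendsto (fun k => ‖P (σ k)‖ ^ 2) atTop (nhds (‖P σstar‖ ^ 2)) := by
    have := (continuous_norm.tendsto (P σstar)).comp hP
    exact (this.pow 2)
  have hnormsq : Tendsto (fun k => ‖σ k‖ ^ 2) atTop (nhds (‖σstar‖ ^ 2)) := by
    have := hPn.add hD
    simpa [hnorm] using this
  -- Step 3: weak + norm convergence ⇒ strong
  have hinner : Tendsto (fun k => (inner ℝ σstar (σ k) : ℝ)) atTop
      (nhds (inner ℝ σstar σstar : ℝ)) := hweak (innerSL ℝ σstar)
  have hdiff : Tendsto (fun k => ‖σ k - σstar‖ ^ 2) atTop (nhds 0) := by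
    have key : ∀ x : X, ‖x - σstar‖ ^ 2
        = ‖x‖ ^ 2 - 2 * (inner ℝ σstar x : ℝ) + ‖σstar‖ ^ 2 := by
      intro x
      rw [@norm_sub_sq_real X _ _ x σstar, real_inner_comm σstar x]
    have h := (hnormsq.sub ((tendsto_const_nhds (x := (2:ℝ)) (f := atTop)).mul hinner)).add
      (tendsto_const_nhds (x := ‖σstar‖ ^ 2))
    have : Tendsto (fun k => ‖σ k - σstar‖ ^ 2) atTop
        (nhds (‖σstar‖ ^ 2 - 2 * (inner ℝ σstar σstar : ℝ) + ‖σstar‖ ^ 2)) := by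
      simpa [key] using h
    have e : ‖σstar‖ ^ 2 - 2 * (inner ℝ σstar σstar : ℝ) + ‖σstar‖ ^ 2 = 0 := by
      rw [real_inner_self_eq_norm_sq]; ring
    rwa [e] at this
  have := hdiff.sqrt
  simpa [Real.sqrt_sq (norm_nonneg _)] using this
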